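/- If I is an R-rng that is finitely generated as a left R-module by elements commuting with every element of R, then rad(E(R,I)) = rad(R) ⊕ rad(I). -/

import Mathlib

open MulOpposite

/-- The underlying type of the Dorroh (ideal) extension `E(R,I)`. -/
@[ext]
structure Dorroh (R : Type*) (I : Type*) where
  fst : R
  snd : I

/-- `I` is an `R`-rng: a nonunital ring with a compatible `(R,R)`-bimodule structure. -/
class IsRRng (R I : Type*) [Ring R] [NonUnitalRing I] [Module R I] [Module Rᵐᵒᵖ I] : Prop where
  smul_op_smul : ∀ (r : R) (s : Rᵐᵒᵖ) (x : I), r • s • x = s • r • x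
  smul_mul : ∀ (r : R) (x y : I), r • (x * y) = (r • x) * y
  mul_smul_eq : ∀ (r : R) (x y : I), x * (r • y) = (op r • x) * y
  op_smul_mul : ∀ (r : R) (x y : I), op r • (x * y) = x * (op r • y)

namespace Dorroh

variable {R I : Type*} [Ring R] [NonUnitalRing I] [Module R I] [Module Rᵐᵒᵖ I] [IsRRng R I]

instance : Add (Dorroh R I) := ⟨fun p q => ⟨p.fst + q.fst, p.snd + q.snd⟩⟩
instance : Zero (Dorroh R I) := ⟨⟨0, 0⟩⟩
instance : Neg (Dorroh R I) := ⟨fun p => ⟨-p.fst, -p.snd⟩⟩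
instance : Mul (Dorroh R I) :=
  ⟨fun p q => ⟨p.fst * q.fst, op q.fst • p.snd + p.fst • q.snd + p.snd * q.snd⟩⟩
instance : One (Dorroh R I) := ⟨⟨1, 0⟩⟩

set_option linter.unusedSectionVars false

@[simp] theorem add_fst (p q : Dorroh R I) : (p + q).fst = p.fst + q.fst := rfl
@[simp] theorem add_snd (p q : Dorroh R I) : (p + q).snd = p.snd + q.snd := rfl
@[simp] theorem zero_fst : (0 : Dorroh R I).fst = 0 := rfl
@[simp] theorem zero_snd : (0 : Dorroh R I).snd = 0 := rfl
@[simp] theorem neg_fst (p : Dorroh R I) : (-p).fst = -p.fst := rfl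
@[simp] theorem neg_snd (p : Dorroh R I) : (-p).snd = -p.snd := rfl
@[simp] theorem mul_fst (p q : Dorroh R I) : (p * q).fst = p.fst * q.fst := rfl
@[simp] theorem mul_snd (p q : Dorroh R I) :
    (p * q).snd = op q.fst • p.snd + p.fst • q.snd + p.snd * q.snd := rfl
@[simp] theorem one_fst : (1 : Dorroh R I).fst = 1 := rfl
@[simp] theorem one_snd : (1 : Dorroh R I).snd = 0 := rfl

instance : Ring (Dorroh R I) where
  add_assoc a b c := by ext <;> simp [add_assoc]
  zero_add a := by ext <;> simp
  add_zero a := by ext <;> simp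
  add_comm a b := by ext <;> simp [add_comm]
  neg_add_cancel a := by ext <;> simp
  mul_assoc a b c := by
    ext
    · simp [mul_assoc]
    · simp only [mul_snd, mul_fst, smul_add, mul_smul, op_mul, mul_add, add_mul,
        IsRRng.smul_mul, IsRRng.op_smul_mul, IsRRng.smul_op_smul, mul_assoc]
      rw [← IsRRng.mul_smul_eq]
      abel
  one_mul a := by ext <;> simp
  mul_one a := by ext <;> simp
  left_distrib a b c := by
    ext
    · simp [mul_add]
    · simp [op_add, add_smul, smul_add, mul_add]
      abel
  right_distrib a b c := by
    ext
    · simp [add_mul]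
    · simp [op_add, add_smul, smul_add, add_mul]
      abel
  zero_mul a := by ext <;> simp
  mul_zero a := by ext <;> simp
  nsmul := nsmulRec
  zsmul := zsmulRec

theorem mul_def (p q : Dorroh R I) :
    p * q = ⟨p.fst * q.fst, op q.fst • p.snd + p.fst • q.snd + p.snd * q.snd⟩ := rfl

theorem one_def : (1 : Dorroh R I) = ⟨1, 0⟩ := rfl

theorem add_def (p q : Dorroh R I) : p + q = ⟨p.fst + q.fst, p.snd + q.snd⟩ := rfl

end Dorroh

/-- An `R`-subrng of the `R`-rng `I`: an `(R,R)`-subbimodule closed under multiplication. -/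
def IsRSubrng (R : Type*) {I : Type*} [Ring R] [NonUnitalRing I] [Module R I]
    [Module Rᵐᵒᵖ I] (J : Set I) : Prop :=
  (0 : I) ∈ J ∧ (∀ x ∈ J, ∀ y ∈ J, x + y ∈ J) ∧ (∀ x ∈ J, -x ∈ J) ∧
    (∀ x ∈ J, ∀ y ∈ J, x * y ∈ J) ∧ (∀ (r : R), ∀ x ∈ J, r • x ∈ J) ∧
    (∀ (r : R), ∀ x ∈ J, op r • x ∈ J)

/-- An `R`-ideal of the `R`-rng `I`: an `(R,R)`-subbimodule that is an ideal of `I`. -/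
def IsRIdeal (R : Type*) {I : Type*} [Ring R] [NonUnitalRing I] [Module R I]
    [Module Rᵐᵒᵖ I] (J : Set I) : Prop :=
  IsRSubrng R J ∧ ∀ (i : I), ∀ j ∈ J, i * j ∈ J ∧ j * i ∈ J

/-- The annihilator `ann_R(I) = {r : R | rI = Ir = 0}`. -/
def annR (R I : Type*) [Ring R] [NonUnitalRing I] [Module R I] [Module Rᵐᵒᵖ I] : Set R :=
  {r : R | ∀ x : I, r • x = 0 ∧ op r • x = 0}

/-- An element `x` of a rng is left quasi-regular if `x + k + kx = 0` for some `k`. -/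
def IsLQR {I : Type*} [NonUnitalRing I] (x : I) : Prop := ∃ k : I, x + k + k * x = 0

/-- The Jacobson radical of a rng. -/
def rngRad (I : Type*) [NonUnitalRing I] : Set I := {x : I | ∀ j : I, IsLQR (j * x)}

/-- `npowNZ x n = x ^ (n+1)` in a nonunital ring. -/
def npowNZ {I : Type*} [NonUnitalRing I] (x : I) : ℕ → I
  | 0 => x
  | n + 1 => npowNZ x n * x

/-- An element of a rng is nilpotent if some positive power of it is zero. -/
def IsNilElem {I : Type*} [NonUnitalRing I] (x : I) : Prop := ∃ n : ℕ, npowNZ x n = 0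

/-- A subset of a rng is nil if each of its elements is nilpotent. -/
def SetIsNil {I : Type*} [NonUnitalRing I] (S : Set I) : Prop := ∀ x ∈ S, IsNilElem x

/-- A subset of a rng is nilpotent if for some `n` every product of `n+1` of its
elements vanishes. -/
def SetIsNilpotent {I : Type*} [NonUnitalRing I] (S : Set I) : Prop :=
  ∃ n : ℕ, ∀ (x : I) (l : List I), x ∈ S → (∀ y ∈ l, y ∈ S) → l.length = n →
    l.foldl (· * ·) x = 0

/-- The upper nil radical of a rng: the sum of all of its nil (two-sided) ideals. -/
def upperNil (I : Type*) [NonUnitalRing I] : Set I :=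
  ((sSup {J : TwoSidedIdeal I | ∀ x ∈ J, IsNilElem x} : TwoSidedIdeal I) : Set I)

/-- A rng is semiprime if it has no nonzero ideal of square zero. -/
def IsSemiprimeRng (I : Type*) [NonUnitalRing I] : Prop :=
  ∀ J : TwoSidedIdeal I, (∀ x ∈ J, ∀ y ∈ J, x * y = 0) → J = ⊥

/-- A rng is prime if the product of any two nonzero ideals is nonzero. -/
def IsPrimeRng (I : Type*) [NonUnitalRing I] : Prop :=
  ∀ J K : TwoSidedIdeal I, (∀ x ∈ J, ∀ y ∈ K, x * y = 0) → J = ⊥ ∨ K = ⊥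

/-- `ψ : I → R` restricts to an `R`-homomorphism on the subset `J ⊆ I`. -/
def IsRHomOn (R : Type*) {I : Type*} [Ring R] [NonUnitalRing I] [Module R I]
    [Module Rᵐᵒᵖ I] (J : Set I) (ψ : I → R) : Prop :=
  (∀ x ∈ J, ∀ y ∈ J, ψ (x + y) = ψ x + ψ y) ∧
    (∀ x ∈ J, ∀ y ∈ J, ψ (x * y) = ψ x * ψ y) ∧
    (∀ (r : R), ∀ x ∈ J, ψ (r • x) = r * ψ x) ∧
    (∀ (r : R), ∀ x ∈ J, ψ (op r • x) = ψ x * r)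

/-- `φ : I → R` is an `R`-homomorphism. -/
def IsRHom (R : Type*) {I : Type*} [Ring R] [NonUnitalRing I] [Module R I]
    [Module Rᵐᵒᵖ I] (φ : I → R) : Prop :=
  (∀ x y : I, φ (x + y) = φ x + φ y) ∧ (∀ x y : I, φ (x * y) = φ x * φ y) ∧
    (∀ (r : R) (x : I), φ (r • x) = r * φ x) ∧ (∀ (r : R) (x : I), φ (op r • x) = φ x * r)

/-- A two-sided ideal `P` of a ring is prime if `AB ⊆ P` implies `A ⊆ P` or `B ⊆ P`
for all two-sided ideals `A`, `B`. -/
def TsiPrime {S : Type*} [Ring S] (P : TwoSidedIdeal S) : Prop :=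
  ∀ A B : TwoSidedIdeal S, (∀ a ∈ A, ∀ b ∈ B, a * b ∈ P) → A ≤ P ∨ B ≤ P

/-- A two-sided ideal is maximal if it is a maximal proper ideal. -/
def TsiMaximal {S : Type*} [Ring S] (P : TwoSidedIdeal S) : Prop :=
  P ≠ ⊤ ∧ ∀ Q : TwoSidedIdeal S, P ≤ Q → Q = P ∨ Q = ⊤

/-- A two-sided-ideal subset of a ring. -/
def IsTwoSidedIdealSet (R : Type*) [Ring R] (P : Set R) : Prop :=
  (0 : R) ∈ P ∧ (∀ x ∈ P, ∀ y ∈ P, x + y ∈ P) ∧ (∀ x ∈ P, -x ∈ P) ∧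
    (∀ (r : R), ∀ x ∈ P, r * x ∈ P ∧ x * r ∈ P)

/-- A subset `P` of `R` is a prime ideal if it is a two-sided ideal and `AB ⊆ P`
implies `A ⊆ P` or `B ⊆ P` for all two-sided ideals `A, B`. -/
def IsPrimeIdealSet (R : Type*) [Ring R] (P : Set R) : Prop :=
  IsTwoSidedIdealSet R P ∧ ∀ A B : TwoSidedIdeal R,
    (∀ a ∈ A, ∀ b ∈ B, a * b ∈ P) → ((A : Set R) ⊆ P ∨ (B : Set R) ⊆ P)

/-- A subset `P` of `R` is a semiprime ideal if it is a two-sided ideal and `A² ⊆ P`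
implies `A ⊆ P` for all two-sided ideals `A`. -/
def IsSemiprimeIdealSet (R : Type*) [Ring R] (P : Set R) : Prop :=
  IsTwoSidedIdealSet R P ∧ ∀ A : TwoSidedIdeal R,
    (∀ a ∈ A, ∀ b ∈ A, a * b ∈ P) → (A : Set R) ⊆ P

section IdealData

variable (R I : Type*) [Ring R] [NonUnitalRing I] [Module R I] [Module Rᵐᵒᵖ I] [IsRRng R I]

/-- The data describing an ideal of `E(R,I)`: ideals `Z ⊆ A` of `R`, an `R`-subrng `J ⊆ I`,
and a surjective `R`-homomorphism `φ : J → A/Z` (represented by a set-map `ψ : I → R`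
choosing representatives), satisfying conditions (a) `ai - ji ∈ ker φ` and
(b) `ia - ij ∈ ker φ` for all `(a,-j) ∈ K`, `i ∈ I`. -/
def DorrohIdealData (A Z : TwoSidedIdeal R) (J : Set I) (ψ : I → R) : Prop :=
  Z ≤ A ∧ IsRSubrng R J ∧
    (∀ x ∈ J, ∀ y ∈ J, ψ (x + y) - (ψ x + ψ y) ∈ Z) ∧
    (∀ x ∈ J, ∀ y ∈ J, ψ (x * y) - ψ x * ψ y ∈ Z) ∧
    (∀ (r : R), ∀ x ∈ J, ψ (r • x) - r * ψ x ∈ Z) ∧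
    (∀ (r : R), ∀ x ∈ J, ψ (op r • x) - ψ x * r ∈ Z) ∧
    (∀ j ∈ J, ψ j ∈ A) ∧
    (∀ a ∈ A, ∃ j ∈ J, a - ψ j ∈ Z) ∧
    (∀ (a : R), ∀ j ∈ J, a ∈ A → a - ψ j ∈ Z → ∀ i : I,
      (a • i - j * i ∈ J ∧ ψ (a • i - j * i) ∈ Z) ∧
      (op a • i - i * j ∈ J ∧ ψ (op a • i - i * j) ∈ Z))

/-- The subset `K = {(a, -j) : a ∈ A, j ∈ J, a + Z = φ(j)}` of `E(R,I)`. -/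
def DorrohIdealSet (A Z : TwoSidedIdeal R) (J : Set I) (ψ : I → R) : Set (Dorroh R I) :=
  {p : Dorroh R I | p.fst ∈ A ∧ -p.snd ∈ J ∧ p.fst - ψ (-p.snd) ∈ Z}

end IdealData

variable (R I : Type*) [Ring R] [NonUnitalRing I] [Module R I] [Module Rᵐᵒᵖ I] [IsRRng R I]

open MulOpposite


section QRLemmas

variable {S : Type*} [NonUnitalRing S]

theorem isLQR_zero' : IsLQR (0 : S) := ⟨0, by simp⟩

theorem isLQR_add_aux {a d k : S} (h1 : a + k + k * a = 0) (h2 : IsLQR (d + k * d)) :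
    IsLQR (a + d) := by
  obtain ⟨k', hk'⟩ := h2
  refine ⟨k' + k + k' * k, ?_⟩
  have key : (a + d) + (k' + k + k' * k) + (k' + k + k' * k) * (a + d)
      = (a + k + k * a) + ((d + k * d) + k' + k' * (d + k * d)) + k' * (a + k + k * a) := by
    noncomm_ring
  rw [key, h1, hk']
  simp

theorem mem_rngRad_isLQR {x : S} (hx : x ∈ rngRad S) : IsLQR x := by
  obtain ⟨k, hk⟩ := hx (-x)
  refine ⟨k - x - k * x, ?_⟩
  have key : x + (k - x - k * x) + (k - x - k * x) * x
      = (-x) * x + k + k * ((-x) * x) := by noncomm_ring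
  rw [key, hk]

theorem rngRad_zero_mem : (0 : S) ∈ rngRad S := fun j => by
  rw [mul_zero]; exact ⟨0, by simp⟩

theorem rngRad_add_mem {x y : S} (hx : x ∈ rngRad S) (hy : y ∈ rngRad S) :
    x + y ∈ rngRad S := by
  intro s
  rw [mul_add]
  obtain ⟨k, hk⟩ := hx s
  refine isLQR_add_aux hk ?_
  have h : s * y + k * (s * y) = (s + k * s) * y := by noncomm_ring
  rw [h]
  exact hy _

theorem rngRad_neg_mem {x : S} (hx : x ∈ rngRad S) : -x ∈ rngRad S := by
  intro s
  rw [mul_neg, ← neg_mul]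
  exact hx _

theorem rngRad_sub_mem {x y : S} (hx : x ∈ rngRad S) (hy : y ∈ rngRad S) :
    x - y ∈ rngRad S := by
  rw [sub_eq_add_neg]; exact rngRad_add_mem hx (rngRad_neg_mem hy)

theorem rngRad_mul_left_mem {x : S} (hx : x ∈ rngRad S) (j : S) : j * x ∈ rngRad S := by
  intro s; rw [← mul_assoc]; exact hx _

theorem rngRad_sum_mem {ι : Type*} (t : Finset ι) (f : ι → S)
    (hf : ∀ i ∈ t, f i ∈ rngRad S) : (∑ i ∈ t, f i) ∈ rngRad S :=
  Finset.sum_induction f (· ∈ rngRad S) (fun _ _ ha hb => rngRad_add_mem ha hb)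
    rngRad_zero_mem hf

end QRLemmas

section UnitalQR

variable {R : Type*} [Ring R]

theorem isLQR_mul_swap {a b : R} (h : IsLQR (a * b)) : IsLQR (b * a) := by
  obtain ⟨k, hk⟩ := h
  refine ⟨-(b * a) - b * (k * a), ?_⟩
  have key : b * a + (-(b * a) - b * (k * a)) + (-(b * a) - b * (k * a)) * (b * a)
      = -(b * (a * b + k + k * (a * b)) * a) := by noncomm_ring
  rw [key, hk]
  simp

theorem rngRad_mul_right_mem {x : R} (hx : x ∈ rngRad R) (r : R) : x * r ∈ rngRad R := by
  intro s
  rw [← mul_assoc]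
  refine isLQR_mul_swap ?_
  rw [← mul_assoc]
  exact hx _

theorem rngRad_left_inv {x : R} (hx : x ∈ rngRad R) : ∃ u, u * (1 + x) = 1 := by
  obtain ⟨k, hk⟩ := mem_rngRad_isLQR hx
  refine ⟨1 + k, ?_⟩
  have h : (1 + k) * (1 + x) = 1 + (x + k + k * x) := by noncomm_ring
  rw [h, hk, add_zero]

theorem vec_solve : ∀ (n : ℕ) (c : Fin n → R) (A : Fin n → Fin n → R),
    (∀ i m, A i m ∈ rngRad R) →
    ∃ e : Fin n → R, ∀ m, e m + c m + ∑ i, e i * A i m = 0 := by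
  intro n
  induction n with
  | zero => exact fun c A _ => ⟨fun _ => 0, fun m => m.elim0⟩
  | succ n ih =>
    intro c A hA
    obtain ⟨u, hu⟩ := rngRad_left_inv (hA 0 0)
    obtain ⟨e', he'⟩ := ih (fun m => c m.succ - c 0 * (u * A 0 m.succ))
      (fun i m => A i.succ m.succ - A i.succ 0 * (u * A 0 m.succ))
      (fun i m => rngRad_sub_mem (hA _ _)
        (rngRad_mul_right_mem (hA i.succ 0) (u * A 0 m.succ)))
    set e0 : R := -((c 0 + ∑ i, e' i * A i.succ 0) * u) with he0
    refine ⟨Fin.cons e0 e', fun m => ?_⟩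
    refine Fin.cases ?_ (fun m => ?_) m
    · rw [Fin.sum_univ_succ]
      simp only [Fin.cons_zero, Fin.cons_succ]
      have key : e0 + c 0 + (e0 * A 0 0 + ∑ i, e' i * A i.succ 0)
          = (c 0 + ∑ i, e' i * A i.succ 0) * (1 - u * (1 + A 0 0)) := by
        rw [he0]; noncomm_ring
      rw [key, hu]
      simp
    · rw [Fin.sum_univ_succ]
      simp only [Fin.cons_zero, Fin.cons_succ]
      have hIH := he' m
      simp only [mul_sub] at hIH
      rw [Finset.sum_sub_distrib] at hIH
      have hE0 : e0 * A 0 m.succ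
          = -(c 0 * (u * A 0 m.succ)) - ∑ i, e' i * (A i.succ 0 * (u * A 0 m.succ)) := by
        have h1 : e0 * A 0 m.succ
            = -(c 0 * (u * A 0 m.succ))
              - (∑ i, e' i * A i.succ 0) * (u * A 0 m.succ) := by
          rw [he0]; noncomm_ring
        rw [h1, Finset.sum_mul]
        congr 1
        exact Finset.sum_congr rfl fun i _ => mul_assoc _ _ _
      rw [hE0]
      have hre : e' m + c m.succ
            + (-(c 0 * (u * A 0 m.succ)) - (∑ i, e' i * (A i.succ 0 * (u * A 0 m.succ)))
              + ∑ i, e' i * A i.succ m.succ)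
          = e' m + (c m.succ - c 0 * (u * A 0 m.succ))
            + ((∑ i, e' i * A i.succ m.succ)
              - ∑ i, e' i * (A i.succ 0 * (u * A 0 m.succ))) := by abel
      rw [hre]
      exact hIH

end UnitalQR

section CentralFG

variable {R I : Type*} [Ring R] [NonUnitalRing I] [Module R I] [Module Rᵐᵒᵖ I] [IsRRng R I]

theorem isLQR_sum_smul_central (n : ℕ) (g : Fin n → I)
    (hcen : ∀ (i : Fin n) (r : R), r • g i = op r • g i)
    (hrep : ∀ h : I, ∃ t : Fin n → R, h = ∑ i, t i • g i)
    (c : Fin n → R) (hc : ∀ i, c i ∈ rngRad R) :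
    IsLQR (∑ i, c i • g i) := by
  have hTex : ∀ i j, ∃ t : Fin n → R, g i * g j = ∑ m, t m • g m := fun i j => hrep _
  choose T hT using hTex
  have hmul : ∀ e : Fin n → R,
      (∑ i, e i • g i) * (∑ j, c j • g j)
        = ∑ m, (∑ i, e i * (∑ j, c j * T i j m)) • g m := by
    intro e
    rw [Finset.sum_mul_sum]
    have h1 : ∀ i j, (e i • g i) * (c j • g j) = ∑ m, (e i * (c j * T i j m)) • g m := by
      intro i j
      have e1 : g i * (c j • g j) = c j • (g i * g j) := by
        rw [IsRRng.mul_smul_eq, ← hcen, IsRRng.smul_mul]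
      have e2 : (e i • g i) * (c j • g j) = (e i * c j) • (g i * g j) := by
        rw [← IsRRng.smul_mul, e1, smul_smul]
      rw [e2, hT i j, Finset.smul_sum]
      refine Finset.sum_congr rfl fun m _ => ?_
      rw [smul_smul, mul_assoc]
    have h2 : ∀ m : Fin n, (∑ i, e i * (∑ j, c j * T i j m)) • g m
        = ∑ i, ∑ j, (e i * (c j * T i j m)) • g m := by
      intro m
      rw [Finset.sum_smul]
      refine Finset.sum_congr rfl fun i _ => ?_
      rw [Finset.mul_sum, Finset.sum_smul]
    simp_rw [h1, h2]
    have h3 : ∀ i : Fin n, ∑ j, ∑ m, (e i * (c j * T i j m)) • g m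
        = ∑ m, ∑ j, (e i * (c j * T i j m)) • g m := fun i => Finset.sum_comm
    simp_rw [h3]
    exact Finset.sum_comm
  obtain ⟨e, he⟩ := vec_solve n c (fun i m => ∑ j, c j * T i j m)
    (fun i m => rngRad_sum_mem _ _ fun j _ => rngRad_mul_right_mem (hc j) _)
  refine ⟨∑ i, e i • g i, ?_⟩
  rw [hmul e, ← Finset.sum_add_distrib, ← Finset.sum_add_distrib]
  refine Finset.sum_eq_zero fun m _ => ?_
  rw [← add_smul, ← add_smul]
  have h0 : c m + e m + ∑ i, e i * ∑ j, c j * T i j m = 0 := by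
    calc c m + e m + ∑ i, e i * ∑ j, c j * T i j m
        = e m + c m + ∑ i, e i * ∑ j, c j * T i j m := by abel
      _ = 0 := he m
  rw [h0, zero_smul]

end CentralFG


/-- If `I` is generated as a left `R`-module by finitely many elements commuting with
all elements of `R`, then `rad(E(R,I)) = rad(R) ⊕ rad(I)`. -/
theorem dorroh_rad_of_fg_central
    (hfg : ∃ s : Finset I, (∀ x ∈ s, ∀ r : R, r • x = op r • x) ∧
      Submodule.span R (s : Set I) = ⊤) :
    rngRad (Dorroh R I) =
      {p : Dorroh R I | p.fst ∈ rngRad R ∧ p.snd ∈ rngRad I} := by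
  obtain ⟨s, hcen0, hspan⟩ := hfg
  set n := s.card with hn
  let eqv : ↥s ≃ Fin n := s.equivFin
  set g : Fin n → I := fun i => ((eqv.symm i : ↥s) : I) with hg
  have hcen : ∀ (i : Fin n) (r : R), r • g i = op r • g i :=
    fun i r => hcen0 _ (eqv.symm i).2 r
  have hrep : ∀ h : I, ∃ t : Fin n → R, h = ∑ i, t i • g i := by
    intro h
    have hh : h ∈ Submodule.span R (s : Set I) := by rw [hspan]; trivial
    obtain ⟨f, -, hf⟩ := Submodule.mem_span_finset.mp hh
    refine ⟨fun i => f (g i), ?_⟩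
    rw [← hf, ← Finset.sum_coe_sort s (fun x => f x • x)]
    exact (Equiv.sum_comp eqv.symm (fun x : ↥s => f (x : I) • (x : I))).symm
  have key : ∀ r : R, r ∈ rngRad R → ∀ h : I, IsLQR (op r • h) := by
    intro r hr h
    obtain ⟨t, ht⟩ := hrep h
    have hexp : op r • h = ∑ i, (t i * r) • g i := by
      rw [ht, Finset.smul_sum]
      refine Finset.sum_congr rfl fun i _ => ?_
      calc op r • (t i • g i) = t i • (op r • g i) :=
            (IsRRng.smul_op_smul (t i) (op r) (g i)).symm
        _ = t i • (r • g i) := by rw [← hcen i r]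
        _ = (t i * r) • g i := smul_smul _ _ _
    rw [hexp]
    exact isLQR_sum_smul_central n g hcen hrep _ fun i => rngRad_mul_left_mem hr (t i)
  have keyOp : ∀ r : R, r ∈ rngRad R → ∀ j : I, op r • j ∈ rngRad I := by
    intro r hr j j'
    rw [← IsRRng.op_smul_mul]
    exact key r hr _
  have smulMem : ∀ (b : R) (x : I), x ∈ rngRad I → b • x ∈ rngRad I := by
    intro b x hx j
    rw [IsRRng.mul_smul_eq]
    exact hx _
  have dorA : ∀ (a : R) (y : I), IsLQR a → y ∈ rngRad I →
      IsLQR (⟨a, y⟩ : Dorroh R I) := by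
    intro a y ha hy
    obtain ⟨b, hb⟩ := ha
    have hz : y + b • y ∈ rngRad I := rngRad_add_mem hy (smulMem b y hy)
    obtain ⟨k, hk⟩ := mem_rngRad_isLQR hz
    refine ⟨⟨b, op (1 + b) • k⟩, ?_⟩
    have hb1 : (1 + b) + (1 + b) * a = 1 := by
      have h : (1 + b) + (1 + b) * a = 1 + (a + b + b * a) := by noncomm_ring
      rw [h, hb, add_zero]
    have h1 : op (1 + b) • k + op a • op (1 + b) • k = k := by
      rw [← mul_smul, ← op_mul, ← add_smul, ← op_add, hb1, op_one, one_smul]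
    have h2 : (op (1 + b) • k) * y = k * (y + b • y) := by
      rw [← IsRRng.mul_smul_eq, add_smul, one_smul]
    ext
    · show a + b + b * a = 0
      exact hb
    · show y + op (1 + b) • k + (op a • (op (1 + b) • k) + b • y + (op (1 + b) • k) * y) = 0
      calc y + op (1 + b) • k + (op a • (op (1 + b) • k) + b • y + (op (1 + b) • k) * y)
          = (y + b • y) + (op (1 + b) • k + op a • op (1 + b) • k)
            + (op (1 + b) • k) * y := by abel
        _ = (y + b • y) + k + k * (y + b • y) := by rw [h1, h2]
        _ = 0 := hk
  have forward : ∀ (a : R) (y : I), a ∈ rngRad R → y ∈ rngRad I →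
      (⟨a, y⟩ : Dorroh R I) ∈ rngRad (Dorroh R I) := by
    intro a y ha hy q
    show IsLQR (q * ⟨a, y⟩)
    have hq : q * (⟨a, y⟩ : Dorroh R I)
        = ⟨q.fst * a, op a • q.snd + q.fst • y + q.snd * y⟩ := rfl
    rw [hq]
    refine dorA _ _ (ha q.fst) ?_
    exact rngRad_add_mem (rngRad_add_mem (keyOp a ha q.snd) (smulMem q.fst y hy))
      (rngRad_mul_left_mem hy q.snd)
  ext p
  simp only [Set.mem_setOf_eq]
  constructor
  · intro hp
    have hfst : p.fst ∈ rngRad R := by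
      intro sR
      obtain ⟨q, hq⟩ := hp ⟨sR, 0⟩
      refine ⟨q.fst, ?_⟩
      have h := congrArg Dorroh.fst hq
      simpa using h
    refine ⟨hfst, ?_⟩
    have h1 : (⟨p.fst, (0 : I)⟩ : Dorroh R I) ∈ rngRad (Dorroh R I) :=
      forward _ _ hfst rngRad_zero_mem
    have h2 : (⟨0, p.snd⟩ : Dorroh R I) ∈ rngRad (Dorroh R I) := by
      have h := rngRad_add_mem hp (rngRad_neg_mem h1)
      have he : p + -(⟨p.fst, (0 : I)⟩ : Dorroh R I) = ⟨0, p.snd⟩ := by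
        ext <;> simp
      rwa [he] at h
    intro j
    obtain ⟨q, hq⟩ := h2 ⟨0, j⟩
    have hw : (⟨0, j⟩ : Dorroh R I) * ⟨0, p.snd⟩ = ⟨0, j * p.snd⟩ := by
      ext <;> simp
    rw [hw] at hq
    have hfq : q.fst = 0 := by
      have h := congrArg Dorroh.fst hq
      simpa using h
    refine ⟨q.snd, ?_⟩
    have h := congrArg Dorroh.snd hq
    simp only [Dorroh.add_snd, Dorroh.mul_snd, Dorroh.zero_snd, hfq, op_zero, zero_smul,
      add_zero, zero_add] at h
    exact h
  · rintro ⟨h1, h2⟩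
    exact forward _ _ h1 h2
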